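/- For each integer n ≥ 1 let P_n = {z ∈ ℂ : |z| > n} ∪ {z ∈ ℂ : 0 < arg z < 1/n}, where arg is the principal argument. Then: (1) each P_n is an open connected subset of ℂ whose frontier is compact, and the sequence (P_n) is decreasing; (2) the intersection over all n ≥ 1 of the sets P_n is empty; (3) the intersection over all n ≥ 1 of the closures of the P_n equals {z ∈ ℂ : Im z = 0 and Re z ≥ 0}, which is nonempty; in particular (P_n) does not leave compact subsets of ℂ (for instance it meets every circle centered at the origin). -/

import Mathlib

/-- The sets `Pₙ = {|z| > n} ∪ {0 < arg z < 1/n}` of Example 2.2. -/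
noncomputable def exP (n : ℕ) : Set ℂ :=
  {z : ℂ | (n : ℝ) < ‖z‖} ∪
  {z : ℂ | 0 < Complex.arg z ∧ Complex.arg z < 1 / (n : ℝ)}

open Complex Real Set Filter Topology

/-- Characterization of the wedge without `arg`. -/
lemma wedge_iff {θ₀ : ℝ} (h0 : 0 < θ₀) (h1 : θ₀ ≤ 1) (z : ℂ) :
    (0 < Complex.arg z ∧ Complex.arg z < θ₀) ↔
    (0 < z.im ∧ Real.cos θ₀ * z.im < Real.sin θ₀ * z.re) := by
  have hθπ : θ₀ < π := lt_of_le_of_lt h1 (by linarith [Real.pi_gt_three])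
  constructor
  · rintro ⟨ha, hb⟩
    have hz : z ≠ 0 := by
      intro h; rw [h, Complex.arg_zero] at ha; exact lt_irrefl 0 ha
    have habs : 0 < ‖z‖ := norm_pos_iff.mpr hz
    have hsin : Real.sin (Complex.arg z) = z.im / ‖z‖ := Complex.sin_arg z
    have hcos : Real.cos (Complex.arg z) = z.re / ‖z‖ := Complex.cos_arg hz
    have him : z.im = ‖z‖ * Real.sin (Complex.arg z) := by
      rw [hsin]; field_simp
    have hre : z.re = ‖z‖ * Real.cos (Complex.arg z) := by
      rw [hcos]; field_simp
    constructor
    · rw [him]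
      exact mul_pos habs (Real.sin_pos_of_pos_of_lt_pi ha (hb.trans hθπ))
    · have key : 0 < Real.sin (θ₀ - Complex.arg z) :=
        Real.sin_pos_of_pos_of_lt_pi (by linarith) (by linarith)
      rw [Real.sin_sub] at key
      rw [him, hre]
      nlinarith
  · rintro ⟨ha, hb⟩
    have hz : z ≠ 0 := by
      intro h; rw [h] at ha; simp at ha
    have habs : 0 < ‖z‖ := norm_pos_iff.mpr hz
    have hsin : Real.sin (Complex.arg z) = z.im / ‖z‖ := Complex.sin_arg z
    have hcos : Real.cos (Complex.arg z) = z.re / ‖z‖ := Complex.cos_arg hz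
    have hspos : 0 < Real.sin (Complex.arg z) := by rw [hsin]; positivity
    have hargpos : 0 < Complex.arg z := by
      rcases lt_trichotomy 0 (Complex.arg z) with h | h | h
      · exact h
      · rw [← h] at hspos; simp at hspos
      · exfalso
        have := Real.sin_nonpos_of_nonpos_of_neg_pi_le
          (le_of_lt h) (le_of_lt (Complex.neg_pi_lt_arg z))
        linarith
    have hargπ : Complex.arg z < π := by
      rcases lt_or_eq_of_le (Complex.arg_le_pi z) with h | h
      · exact h
      · exfalso
        rw [h] at hspos; simp at hspos
    refine ⟨hargpos, ?_⟩
    have key : 0 < Real.sin (θ₀ - Complex.arg z) := by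
      rw [Real.sin_sub]
      rw [hsin, hcos]
      rw [div_eq_inv_mul, div_eq_inv_mul]
      have : 0 < (‖z‖)⁻¹ := by positivity
      nlinarith
    by_contra hle
    push_neg at hle
    have h2 : θ₀ - Complex.arg z ≤ 0 := by linarith
    have := Real.sin_nonpos_of_nonpos_of_neg_pi_le h2 (by linarith)
    linarith

/-- The wedge as a set. -/
def wedgeSet (θ₀ : ℝ) : Set ℂ := {z : ℂ | 0 < z.im ∧ Real.cos θ₀ * z.im < Real.sin θ₀ * z.re}

lemma one_div_nat_pos {n : ℕ} (hn : 1 ≤ n) : 0 < 1 / (n : ℝ) := by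
  have : (0:ℝ) < n := by exact_mod_cast hn
  positivity

lemma one_div_nat_le_one {n : ℕ} (hn : 1 ≤ n) : 1 / (n : ℝ) ≤ 1 := by
  rw [div_le_one (by exact_mod_cast hn)]
  exact_mod_cast hn

lemma exP_eq {n : ℕ} (hn : 1 ≤ n) :
    exP n = {z : ℂ | (n : ℝ) < ‖z‖} ∪ wedgeSet (1 / (n : ℝ)) := by
  ext z
  simp only [exP, wedgeSet, Set.mem_union, Set.mem_setOf_eq]
  exact or_congr Iff.rfl (wedge_iff (one_div_nat_pos hn) (one_div_nat_le_one hn) z)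

lemma isConnected_exterior {a : ℝ} (ha : 0 ≤ a) :
    IsConnected {z : ℂ | a < ‖z‖} := by
  set g : ℂ → ℂ := fun w => (↑(1 + a / ‖w‖) : ℂ) * w with hg
  have habs : ∀ w : ℂ, w ≠ 0 → ‖g w‖ = ‖w‖ + a := by
    intro w hw
    have hw' : 0 < ‖w‖ := norm_pos_iff.mpr hw
    have h1 : (0:ℝ) < 1 + a / ‖w‖ := by positivity
    simp only [hg, norm_mul, Complex.norm_real, Real.norm_eq_abs, abs_of_pos h1]
    field_simp
  have himg : {z : ℂ | a < ‖z‖} = g '' {(0:ℂ)}ᶜ := by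
    ext z
    simp only [Set.mem_setOf_eq, Set.mem_image, Set.mem_compl_iff, Set.mem_singleton_iff]
    constructor
    · intro hz
      have hz0 : z ≠ 0 := by
        intro h; rw [h] at hz; simp at hz; linarith
      have hzpos : 0 < ‖z‖ := norm_pos_iff.mpr hz0
      refine ⟨(↑(1 - a / ‖z‖) : ℂ) * z, ?_, ?_⟩
      · intro h
        rcases mul_eq_zero.mp h with h | h
        · have : (1 : ℝ) - a / ‖z‖ = 0 := by exact_mod_cast h
          have : a / ‖z‖ < 1 := by
            rw [div_lt_one hzpos]; exact hz
          linarith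
        · exact hz0 h
      · have hfac : (0:ℝ) < 1 - a / ‖z‖ := by
          rw [sub_pos, div_lt_one hzpos]; exact hz
        have habsw : ‖(↑(1 - a / ‖z‖) : ℂ) * z‖
            = (1 - a / ‖z‖) * ‖z‖ := by
          rw [norm_mul, Complex.norm_real, Real.norm_eq_abs, abs_of_pos hfac]
        simp only [hg, habsw]
        rw [← mul_assoc, ← Complex.ofReal_mul]
        have : (1 + a / ((1 - a / ‖z‖) * ‖z‖)) * (1 - a / ‖z‖) = 1 := by
          have h2 : (1 - a / ‖z‖) * ‖z‖ = ‖z‖ - a := by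
            field_simp
          rw [h2]
          have h3 : ‖z‖ - a ≠ 0 := by linarith [hz]
          field_simp
          ring
        rw [this]; simp
    · rintro ⟨w, hw, rfl⟩
      rw [habs w hw]
      have : 0 < ‖w‖ := norm_pos_iff.mpr hw
      linarith
  have hconn : IsConnected ({(0:ℂ)}ᶜ : Set ℂ) := by
    apply isConnected_compl_singleton_of_one_lt_rank
    rw [rank_real_complex]; norm_num
  have hcont : ContinuousOn g {(0:ℂ)}ᶜ := by
    apply ContinuousOn.mul
    · apply Complex.continuous_ofReal.comp_continuousOn
      apply ContinuousOn.add continuousOn_const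
      apply ContinuousOn.div continuousOn_const continuous_norm.continuousOn
      intro w hw
      simpa using norm_pos_iff.mpr (by simpa using hw)
    · exact continuousOn_id
  rw [himg]
  exact hconn.image g hcont

lemma isConnected_wedge {θ₀ : ℝ} (h0 : 0 < θ₀) (h1 : θ₀ ≤ 1) :
    IsConnected (wedgeSet θ₀) := by
  have hθπ : θ₀ < π := lt_of_le_of_lt h1 (by linarith [Real.pi_gt_three])
  have hsinpos : 0 < Real.sin θ₀ := Real.sin_pos_of_pos_of_lt_pi h0 hθπ
  have hconv : Convex ℝ (wedgeSet θ₀) := by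
    have heq : wedgeSet θ₀ = {z : ℂ | 0 < z.im} ∩
        {z : ℂ | 0 < Real.sin θ₀ * z.re - Real.cos θ₀ * z.im} := by
      ext z; simp only [wedgeSet, Set.mem_setOf_eq, Set.mem_inter_iff, sub_pos]
    rw [heq]
    apply Convex.inter
    · exact convex_halfSpace_gt ⟨fun x y => by simp, fun c x => by simp [Complex.smul_im]⟩ 0
    · refine convex_halfSpace_gt ⟨fun x y => by simp; ring, fun c x => by
        simp [Complex.smul_re, Complex.smul_im]; ring⟩ 0
  have hne : (wedgeSet θ₀).Nonempty := by
    refine ⟨⟨1, Real.sin θ₀ / 2⟩, ?_, ?_⟩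
    · simpa using half_pos hsinpos
    · simp only
      have hc : Real.cos θ₀ ≤ 1 := Real.cos_le_one θ₀
      nlinarith
  exact hconv.isConnected hne

lemma isOpen_exP {n : ℕ} (hn : 1 ≤ n) : IsOpen (exP n) := by
  rw [exP_eq hn]
  apply IsOpen.union
  · exact isOpen_lt continuous_const continuous_norm
  · exact (isOpen_lt continuous_const Complex.continuous_im).inter
      (isOpen_lt (continuous_const.mul Complex.continuous_im)
        (continuous_const.mul Complex.continuous_re))

lemma isConnected_exP {n : ℕ} (hn : 1 ≤ n) : IsConnected (exP n) := by
  have h0 := one_div_nat_pos hn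
  have h1 := one_div_nat_le_one hn
  have hθπ : 1 / (n:ℝ) < π := lt_of_le_of_lt h1 (by linarith [Real.pi_gt_three])
  have hsinpos : 0 < Real.sin (1 / (n:ℝ)) := Real.sin_pos_of_pos_of_lt_pi h0 hθπ
  rw [exP_eq hn]
  apply IsConnected.union _ (isConnected_exterior (by positivity)) (isConnected_wedge h0 h1)
  refine ⟨⟨(n:ℝ) + 1, ((n:ℝ) + 1) * (Real.sin (1/(n:ℝ)) / 2)⟩, ?_, ?_, ?_⟩
  · show (n:ℝ) < ‖_‖
    have h2 : |(⟨(n:ℝ) + 1, ((n:ℝ) + 1) * (Real.sin (1/(n:ℝ)) / 2)⟩ : ℂ).re| ≤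
        ‖(⟨(n:ℝ) + 1, ((n:ℝ) + 1) * (Real.sin (1/(n:ℝ)) / 2)⟩ : ℂ)‖ :=
      Complex.abs_re_le_norm _
    have h3 : (0:ℝ) ≤ (n:ℝ) + 1 := by positivity
    rw [_root_.abs_of_nonneg h3] at h2
    linarith
  · show (0:ℝ) < ((n:ℝ) + 1) * (Real.sin (1/(n:ℝ)) / 2)
    positivity
  · show Real.cos (1/(n:ℝ)) * (((n:ℝ) + 1) * (Real.sin (1/(n:ℝ)) / 2)) <
      Real.sin (1/(n:ℝ)) * ((n:ℝ) + 1)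
    have hc : Real.cos (1/(n:ℝ)) ≤ 1 := Real.cos_le_one _
    have h3 : (0:ℝ) < (n:ℝ) + 1 := by positivity
    have h4 := mul_le_of_le_one_left (le_of_lt (mul_pos h3 (half_pos hsinpos))) hc
    nlinarith [mul_pos h3 hsinpos]

lemma isCompact_frontier_exP {n : ℕ} (hn : 1 ≤ n) : IsCompact (frontier (exP n)) := by
  apply IsCompact.of_isClosed_subset (isCompact_closedBall (0:ℂ) n) isClosed_frontier
  intro x hx
  rw [(isOpen_exP hn).frontier_eq] at hx
  have hxn : x ∉ exP n := hx.2
  have : ¬ ((n:ℝ) < ‖x‖) := fun h => hxn (Or.inl h)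
  push_neg at this
  simpa [Metric.mem_closedBall, Complex.dist_eq] using this

lemma mem_closure_exP {n : ℕ} (hn : 1 ≤ n) {x : ℂ} (him : x.im = 0) (hre : 0 ≤ x.re) :
    x ∈ closure (exP n) := by
  have h0 := one_div_nat_pos hn
  have h1 := one_div_nat_le_one hn
  have hθπ : 1 / (n:ℝ) < π := lt_of_le_of_lt h1 (by linarith [Real.pi_gt_three])
  set f : ℝ → ℂ := fun t => (↑((x.re + t) * Real.cos t) + ↑((x.re + t) * Real.sin t) * Complex.I)
    with hf
  have hf0 : f 0 = x := by
    apply Complex.ext <;> simp [hf, him]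
  have hcont : Continuous f := by
    apply Continuous.add
    · exact Complex.continuous_ofReal.comp ((continuous_const.add continuous_id).mul
        Real.continuous_cos)
    · exact (Complex.continuous_ofReal.comp ((continuous_const.add continuous_id).mul
        Real.continuous_sin)).mul continuous_const
  have htend : Tendsto f (𝓝[>] 0) (𝓝 x) := by
    rw [← hf0]
    exact (hcont.tendsto 0).mono_left nhdsWithin_le_nhds
  apply mem_closure_of_tendsto htend
  filter_upwards [Ioo_mem_nhdsGT_of_mem (by exact ⟨le_refl 0, h0⟩ : (0:ℝ) ∈ Set.Ico 0 (1/(n:ℝ)))]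
    with t ht
  rw [exP_eq hn]
  right
  have hre' : (f t).re = (x.re + t) * Real.cos t := by
    simp [hf, Complex.cos_ofReal_re]
  have him' : (f t).im = (x.re + t) * Real.sin t := by
    simp [hf, Complex.sin_ofReal_re]
  have htpos : 0 < t := ht.1
  have htlt : t < 1/(n:ℝ) := ht.2
  have hxt : 0 < x.re + t := by linarith
  constructor
  · rw [him']
    exact mul_pos hxt (Real.sin_pos_of_pos_of_lt_pi htpos (by linarith))
  · rw [hre', him']
    have key : 0 < Real.sin (1/(n:ℝ) - t) :=
      Real.sin_pos_of_pos_of_lt_pi (by linarith) (by linarith)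
    rw [Real.sin_sub] at key
    nlinarith

lemma exterior_closure_subset {n : ℕ} :
    closure {z : ℂ | (n:ℝ) < ‖z‖} ⊆ {z : ℂ | (n:ℝ) ≤ ‖z‖} :=
  closure_minimal (fun z hz => show (n:ℝ) ≤ ‖z‖ from le_of_lt hz)
    (isClosed_le continuous_const continuous_norm)

lemma wedge_closure_subset {θ₀ : ℝ} :
    closure (wedgeSet θ₀) ⊆
      {z : ℂ | 0 ≤ z.im ∧ Real.cos θ₀ * z.im ≤ Real.sin θ₀ * z.re} := by
  refine closure_minimal (fun z hz => ?_) ?_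
  · have h1 : 0 ≤ z.im := le_of_lt hz.1
    have h2 : Real.cos θ₀ * z.im ≤ Real.sin θ₀ * z.re := le_of_lt hz.2
    exact ⟨h1, h2⟩
  · exact (isClosed_le continuous_const Complex.continuous_im).inter
      (isClosed_le (continuous_const.mul Complex.continuous_im)
        (continuous_const.mul Complex.continuous_re))

lemma exP_sphere {n : ℕ} (hn : 1 ≤ n) {r : ℝ} (hr : 0 < r) :
    (exP n ∩ Metric.sphere (0 : ℂ) r).Nonempty := by
  have h0 := one_div_nat_pos hn
  have h1 := one_div_nat_le_one hn
  have hθπ : 1 / (n:ℝ) < π := lt_of_le_of_lt h1 (by linarith [Real.pi_gt_three])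
  set c : ℝ := 1 / (2 * (n:ℝ)) with hc
  have hc0 : 0 < c := by
    have : (0:ℝ) < n := by exact_mod_cast hn
    positivity
  have hchalf : c = (1/(n:ℝ)) / 2 := by rw [hc]; ring
  have hclt : c < 1/(n:ℝ) := by rw [hchalf]; linarith
  have hdiff : 1/(n:ℝ) - c = c := by rw [hchalf]; ring
  refine ⟨(↑r : ℂ) * (↑(Real.cos c) + ↑(Real.sin c) * Complex.I), ?_, ?_⟩
  · rw [exP_eq hn]
    right
    have hre' : ((↑r : ℂ) * (↑(Real.cos c) + ↑(Real.sin c) * Complex.I)).re = r * Real.cos c := by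
      simp [Complex.cos_ofReal_re]
    have him' : ((↑r : ℂ) * (↑(Real.cos c) + ↑(Real.sin c) * Complex.I)).im = r * Real.sin c := by
      simp [Complex.sin_ofReal_re]
    have hsinc : 0 < Real.sin c := Real.sin_pos_of_pos_of_lt_pi hc0 (by linarith)
    constructor
    · rw [him']; positivity
    · rw [hre', him']
      have key : 0 < Real.sin (1/(n:ℝ) - c) := by
        rw [hdiff]; exact hsinc
      rw [Real.sin_sub] at key
      nlinarith
  · rw [Metric.mem_sphere, dist_zero_right, norm_mul,
      Complex.norm_real, Real.norm_eq_abs, Complex.ofReal_cos, Complex.ofReal_sin,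
      Complex.norm_cos_add_sin_mul_I, _root_.abs_of_pos hr, mul_one]

theorem exP_does_not_leave_compacts :
    (∀ n : ℕ, 1 ≤ n → IsOpen (exP n) ∧ IsConnected (exP n) ∧ IsCompact (frontier (exP n))) ∧
    (∀ n : ℕ, 1 ≤ n → exP (n + 1) ⊆ exP n) ∧
    (⋂ (n : ℕ) (_ : 1 ≤ n), exP n) = ∅ ∧
    (⋂ (n : ℕ) (_ : 1 ≤ n), closure (exP n)) = {z : ℂ | z.im = 0 ∧ 0 ≤ z.re} ∧
    ({z : ℂ | z.im = 0 ∧ 0 ≤ z.re} : Set ℂ).Nonempty ∧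
    (∀ r : ℝ, 0 < r → ∀ n : ℕ, 1 ≤ n → (exP n ∩ Metric.sphere (0 : ℂ) r).Nonempty) ∧
    ¬ (∀ K : Set ℂ, IsCompact K → ∃ n₀ : ℕ, ∀ n ≥ n₀, 1 ≤ n → K ∩ exP n = ∅) := by
  refine ⟨fun n hn => ⟨isOpen_exP hn, isConnected_exP hn, isCompact_frontier_exP hn⟩,
    ?_, ?_, ?_, ⟨1, by simp⟩, fun r hr n hn => exP_sphere hn hr, ?_⟩
  · -- decreasing
    intro n hn z hz
    rcases hz with h | ⟨h1, h2⟩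
    · left
      have : (n:ℝ) < ((n:ℕ) + 1 : ℕ) := by push_cast; linarith
      calc (n:ℝ) < (((n:ℕ) + 1 : ℕ) : ℝ) := this
        _ < ‖z‖ := h
    · right
      refine ⟨h1, lt_of_lt_of_le h2 ?_⟩
      apply one_div_le_one_div_of_le
      · exact_mod_cast hn
      · push_cast; linarith
  · -- empty intersection
    rw [Set.eq_empty_iff_forall_notMem]
    intro z hz
    simp only [Set.mem_iInter] at hz
    set N₁ : ℕ := ⌈‖z‖⌉₊ + 1 with hN₁
    have hN₁abs : ‖z‖ < N₁ := by
      calc ‖z‖ ≤ ⌈‖z‖⌉₊ := Nat.le_ceil _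
        _ < N₁ := by exact_mod_cast Nat.lt_succ_self _
    rcases le_or_gt (Complex.arg z) 0 with harg | harg
    · rcases hz N₁ (by omega) with h | ⟨h1, _⟩
      · have h' : (N₁:ℝ) < ‖z‖ := h
        linarith
      · linarith
    · obtain ⟨k, hk⟩ := exists_nat_one_div_lt harg
      set N : ℕ := max N₁ (k + 1) with hN
      rcases hz N (by omega) with h | ⟨h1, h2⟩
      · have h' : (N:ℝ) < ‖z‖ := h
        have : (N₁:ℝ) ≤ (N:ℝ) := by exact_mod_cast le_max_left _ _
        linarith
      · have hle : 1/(N:ℝ) ≤ 1/((k:ℝ)+1) := by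
          apply one_div_le_one_div_of_le (by positivity)
          have : ((k+1 : ℕ):ℝ) ≤ (N:ℝ) := by exact_mod_cast le_max_right _ _
          push_cast at this ⊢
          linarith
        linarith
  · -- intersection of closures
    apply Set.Subset.antisymm
    · intro z hz
      simp only [Set.mem_iInter] at hz
      have key : ∀ m : ℕ, 1 ≤ m → ‖z‖ < m →
          0 ≤ z.im ∧ Real.cos (1/(m:ℝ)) * z.im ≤ Real.sin (1/(m:ℝ)) * z.re := by
        intro m hm hlt
        have h := hz m hm
        rw [exP_eq hm, closure_union] at h
        rcases h with h | h
        · exact absurd (exterior_closure_subset h) (by simp only [Set.mem_setOf_eq]; linarith)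
        · exact wedge_closure_subset h
      set N₀ : ℕ := ⌈‖z‖⌉₊ + 1 with hN₀
      have hN₀abs : ‖z‖ < N₀ := by
        calc ‖z‖ ≤ ⌈‖z‖⌉₊ := Nat.le_ceil _
          _ < N₀ := by exact_mod_cast Nat.lt_succ_self _
      have hN₀1 : 1 ≤ N₀ := by omega
      have himnn : 0 ≤ z.im := (key N₀ hN₀1 hN₀abs).1
      have h1n : Tendsto (fun m : ℕ => 1/(m:ℝ)) atTop (𝓝 0) :=
        tendsto_one_div_atTop_nhds_zero_nat
      have hlim : Tendsto (fun m : ℕ => Real.sin (1/(m:ℝ)) * z.re - Real.cos (1/(m:ℝ)) * z.im)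
          atTop (𝓝 (Real.sin 0 * z.re - Real.cos 0 * z.im)) := by
        exact (((Real.continuous_sin.tendsto 0).comp h1n).mul_const _).sub
          (((Real.continuous_cos.tendsto 0).comp h1n).mul_const _)
      have hev : ∀ᶠ m : ℕ in atTop,
          0 ≤ Real.sin (1/(m:ℝ)) * z.re - Real.cos (1/(m:ℝ)) * z.im := by
        rw [eventually_atTop]
        refine ⟨N₀, fun m hm => ?_⟩
        have hm1 : 1 ≤ m := le_trans hN₀1 hm
        have habs : ‖z‖ < m := by
          have : (N₀:ℝ) ≤ (m:ℝ) := by exact_mod_cast hm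
          linarith
        linarith [(key m hm1 habs).2]
      have hle := ge_of_tendsto hlim hev
      rw [Real.sin_zero, Real.cos_zero] at hle
      have himz : z.im = 0 := le_antisymm (by linarith) himnn
      refine ⟨himz, ?_⟩
      have h2 := (key N₀ hN₀1 hN₀abs).2
      rw [himz] at h2
      have hsinpos : 0 < Real.sin (1/(N₀:ℝ)) := by
        apply Real.sin_pos_of_pos_of_lt_pi (one_div_nat_pos hN₀1)
        linarith [one_div_nat_le_one hN₀1, Real.pi_gt_three]
      nlinarith
    · intro z hz
      simp only [Set.mem_setOf_eq] at hz
      simp only [Set.mem_iInter]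
      intro n hn
      exact mem_closure_exP hn hz.1 hz.2
  · -- does not leave compacts
    intro h
    obtain ⟨n₀, hn₀⟩ := h (Metric.sphere (0:ℂ) 1) (isCompact_sphere 0 1)
    have h1 := hn₀ (max 1 n₀) (le_max_right _ _) (le_max_left _ _)
    have h2 := exP_sphere (n := max 1 n₀) (le_max_left _ _) one_pos
    rw [Set.inter_comm] at h2
    rw [h1] at h2
    exact Set.not_nonempty_empty h2
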